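/- Let H be the corona of a connected graph G (obtained by attaching one pendant vertex to each vertex of G). Then χ(G) ≤ χ_pcf(H) ≤ χ(G) + 1. -/

import Mathlib

open SimpleGraph

/-- A proper conflict-free coloring: proper, and every non-isolated vertex has a color
appearing exactly once in its open neighborhood. -/
def IsPCFColoring {V : Type*} (G : SimpleGraph V) {n : ℕ} (c : V → Fin n) : Prop :=
  (∀ u v, G.Adj u v → c u ≠ c v) ∧
  ∀ v : V, (G.neighborSet v).Nonempty →
    ∃ k : Fin n, ∃! u, u ∈ G.neighborSet v ∧ c u = k

/-- The PCF chromatic number. -/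
noncomputable def pcfChromNum {V : Type*} (G : SimpleGraph V) : ℕ :=
  sInf {n | ∃ c : V → Fin n, IsPCFColoring G c}

/-- The chromatic number (as a natural number). -/
noncomputable def chromNum {V : Type*} (G : SimpleGraph V) : ℕ :=
  sInf {n | G.Colorable n}
/-- The corona of a graph: attach one pendant vertex to each vertex. -/
def corona {V : Type*} (G : SimpleGraph V) : SimpleGraph (V ⊕ V) :=
  SimpleGraph.fromRel (fun a b => match a, b with
    | Sum.inl u, Sum.inl v => G.Adj u v
    | Sum.inl u, Sum.inr v => u = v
    | _, _ => False)
theorem pcf_corona_bounds {V : Type*} [Fintype V] (G : SimpleGraph V) (hG : G.Connected) :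
    chromNum G ≤ pcfChromNum (corona G) ∧ pcfChromNum (corona G) ≤ chromNum G + 1 := by
  classical
  have hadj : ∀ a b, (corona G).Adj a b ↔ a ≠ b ∧
      ((match a, b with
        | Sum.inl u, Sum.inl v => G.Adj u v
        | Sum.inl u, Sum.inr v => u = v
        | _, _ => False) ∨
       (match b, a with
        | Sum.inl u, Sum.inl v => G.Adj u v
        | Sum.inl u, Sum.inr v => u = v
        | _, _ => False)) := by
    intro a b; exact SimpleGraph.fromRel_adj _ a b
  -- obtain a proper coloring of G with chromNum G colors
  have hcol : G.Colorable (chromNum G) :=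
    Nat.sInf_mem (⟨Fintype.card V, G.colorable_of_fintype⟩ : {n | G.Colorable n}.Nonempty)
  obtain ⟨c⟩ := hcol
  set m := chromNum G with hm
  -- build a PCF coloring of the corona with m+1 colors
  set f : V ⊕ V → Fin (m + 1) := fun x => match x with
    | Sum.inl v => (c v).castSucc
    | Sum.inr _ => Fin.last m with hf
  have hlast : ∀ v : V, f (Sum.inl v) ≠ Fin.last m := by
    intro v
    exact ne_of_lt (Fin.castSucc_lt_last (c v))
  have hfpcf : IsPCFColoring (corona G) f := by
    constructor
    · intro a b hab
      rw [hadj] at hab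
      obtain ⟨hne, h⟩ := hab
      match a, b with
      | Sum.inl u, Sum.inl v =>
          have hGuv : G.Adj u v := by
            rcases h with h | h
            · exact h
            · exact G.adj_symm h
          simp only [hf]
          intro hc
          exact c.valid hGuv (Fin.castSucc_injective _ hc)
      | Sum.inl u, Sum.inr v => exact hlast u
      | Sum.inr u, Sum.inl v => exact fun h' => hlast v h'.symm
      | Sum.inr u, Sum.inr v => rcases h with h | h <;> exact h.elim
    · intro a _
      match a with
      | Sum.inl v =>
          refine ⟨Fin.last m, Sum.inr v, ⟨?_, rfl⟩, ?_⟩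
          · rw [SimpleGraph.mem_neighborSet, hadj]
            exact ⟨by simp, Or.inl rfl⟩
          · rintro u ⟨hu, hcu⟩
            rw [SimpleGraph.mem_neighborSet, hadj] at hu
            obtain ⟨hne, h⟩ := hu
            match u with
            | Sum.inl w => exact absurd hcu (hlast w)
            | Sum.inr w =>
                rcases h with h | h
                · exact congrArg Sum.inr h.symm
                · exact h.elim
      | Sum.inr v =>
          refine ⟨f (Sum.inl v), Sum.inl v, ⟨?_, rfl⟩, ?_⟩
          · rw [SimpleGraph.mem_neighborSet, hadj]
            exact ⟨by simp, Or.inr rfl⟩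
          · rintro u ⟨hu, hcu⟩
            rw [SimpleGraph.mem_neighborSet, hadj] at hu
            obtain ⟨hne, h⟩ := hu
            match u with
            | Sum.inl w =>
                rcases h with h | h
                · exact h.elim
                · exact congrArg Sum.inl h
            | Sum.inr w => rcases h with h | h <;> exact h.elim
  have hmem : (m + 1) ∈ {n | ∃ c : V ⊕ V → Fin n, IsPCFColoring (corona G) c} := ⟨f, hfpcf⟩
  have hub : pcfChromNum (corona G) ≤ m + 1 := Nat.sInf_le hmem
  -- lower bound
  have hSne : {n | ∃ c : V ⊕ V → Fin n, IsPCFColoring (corona G) c}.Nonempty := ⟨m + 1, hmem⟩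
  obtain ⟨g, hg⟩ := Nat.sInf_mem hSne
  have hcolG : G.Colorable (pcfChromNum (corona G)) := by
    refine ⟨SimpleGraph.Coloring.mk (fun v => g (Sum.inl v)) ?_⟩
    intro u v huv
    apply hg.1
    rw [hadj]
    exact ⟨by simpa using huv.ne, Or.inl huv⟩
  have hlb : chromNum G ≤ pcfChromNum (corona G) := Nat.sInf_le hcolG
  exact ⟨hlb, hub⟩
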